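/- Let X be a real Banach space, let f : X → ℝ be quasiconvex and densely continuous, and let m ∈ ℝ be the topological essential infimum of f. If F'_m = {x ∈ X : f(x) ≤ m} is nonmeager, then the interior of F'_m is nonempty and the boundary ∂F'_m is nowhere dense; if in addition X is separable, then ∂F'_m is Aronszajn null. -/

import Mathlib

open Filter Topology Set MeasureTheory

/-- `f` is quasiconvex: `f (l•x + (1-l)•y) ≤ max (f x) (f y)` for `l ∈ [0,1]`. -/
def QuasiconvexFun {X : Type*} [AddCommGroup X] [Module ℝ X] (f : X → ℝ) : Prop :=
  ∀ x y : X, ∀ l : ℝ, l ∈ Set.Icc (0 : ℝ) 1 →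
    f (l • x + (1 - l) • y) ≤ max (f x) (f y)

/-- `f` is strictly quasiconvex. -/
def StrictlyQuasiconvexFun {X : Type*} [AddCommGroup X] [Module ℝ X] (f : X → ℝ) : Prop :=
  ∀ x y : X, x ≠ y → ∀ l : ℝ, l ∈ Set.Ioo (0 : ℝ) 1 →
    f (l • x + (1 - l) • y) < max (f x) (f y)

/-- `f` is densely continuous: its set of points of continuity is dense. -/
def DenselyContinuous {X : Type*} [TopologicalSpace X] (f : X → ℝ) : Prop :=
  Dense {x : X | ContinuousAt f x}

/-- `m` is the topological essential infimum of `f`: the strict sublevel set `{f < α}`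
is meager for `α < m` and nonmeager for `α > m`. -/
def IsTopEssInf {X : Type*} [TopologicalSpace X] (f : X → ℝ) (m : ℝ) : Prop :=
  (∀ α : ℝ, α < m → IsMeagre {x : X | f x < α}) ∧
  (∀ α : ℝ, m < α → ¬ IsMeagre {x : X | f x < α})

/-- Aronszajn null set: a Borel set `N` such that for every sequence `ξ` with dense linear
span, `N` decomposes as a countable union of Borel sets, the `n`-th of which has Lebesgue
null intersection with every line of direction `ξ n`. -/
def AronszajnNull {X : Type*} [NormedAddCommGroup X] [NormedSpace ℝ X]
    [MeasurableSpace X] (N : Set X) : Prop :=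
  MeasurableSet N ∧
  ∀ ξ : ℕ → X, Dense (Submodule.span ℝ (Set.range ξ) : Set X) →
    ∃ Nn : ℕ → Set X, N = ⋃ n, Nn n ∧
      ∀ n, MeasurableSet (Nn n) ∧
        ∀ x : X, MeasureTheory.volume {t : ℝ | x + t • ξ n ∈ Nn n} = 0

/-- Haar null set: `E` is contained in a Borel set `B` for which there is a Borel
probability measure vanishing on all translates of `B`. -/
def HaarNull {X : Type*} [AddCommGroup X] [TopologicalSpace X]
    [MeasurableSpace X] (E : Set X) : Prop :=
  ∃ B : Set X, E ⊆ B ∧ MeasurableSet B ∧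
    ∃ μ : MeasureTheory.Measure X, MeasureTheory.IsProbabilityMeasure μ ∧
      ∀ x : X, μ ((fun y => x + y) '' B) = 0

/-- Hadamard differentiability of `f` at `x`. -/
def HadamardDiffAt {X : Type*} [NormedAddCommGroup X] [NormedSpace ℝ X]
    (f : X → ℝ) (x : X) : Prop :=
  ∃ L : X →L[ℝ] ℝ, ∀ h : X, ∀ t : ℕ → ℝ, (∀ n, t n ≠ 0) →
    Tendsto t atTop (𝓝 0) → ∀ hs : ℕ → X, Tendsto hs atTop (𝓝 h) →
      Tendsto (fun n => (f (x + t n • hs n) - f x) / t n) atTop (𝓝 (L h))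

/-- Hadamard differentiability at `x` of a function whose relevant values are those on `V`. -/
def HadamardDiffWithinAt {X : Type*} [NormedAddCommGroup X] [NormedSpace ℝ X]
    (f : X → ℝ) (V : Set X) (x : X) : Prop :=
  ∃ L : X →L[ℝ] ℝ, ∀ h : X, ∀ t : ℕ → ℝ, (∀ n, t n ≠ 0) →
    Tendsto t atTop (𝓝 0) → ∀ hs : ℕ → X, Tendsto hs atTop (𝓝 h) →
      (∀ n, x + t n • hs n ∈ V) →
      Tendsto (fun n => (f (x + t n • hs n) - f x) / t n) atTop (𝓝 (L h))

/-- Gâteaux differentiability of `f` at `x` with derivative `L`. -/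
def GateauxDiffAt {X : Type*} [NormedAddCommGroup X] [NormedSpace ℝ X]
    (f : X → ℝ) (x : X) (L : X →L[ℝ] ℝ) : Prop :=
  ∀ h : X, Tendsto (fun t : ℝ => (f (x + t • h) - f x) / t) (𝓝[≠] 0) (𝓝 (L h))

/-- Essential Gâteaux differentiability of `f` at `x`: directional derivatives exist and
are given by a continuous linear functional for a comeager (residual) set of directions
in the unit sphere. -/
def EssGateauxDiffAt {X : Type*} [NormedAddCommGroup X] [NormedSpace ℝ X]
    (f : X → ℝ) (x : X) : Prop :=
  ∃ L : X →L[ℝ] ℝ, ∃ Ω : Set (Metric.sphere (0 : X) 1), IsMeagre Ωᶜ ∧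
    ∀ h ∈ Ω, Tendsto (fun t : ℝ => (f (x + t • (h : X)) - f x) / t) (𝓝[≠] 0) (𝓝 (L (h : X)))

/-- `K` is a closed convex cone. -/
def IsClosedConvexCone {X : Type*} [NormedAddCommGroup X] [NormedSpace ℝ X] (K : Set X) : Prop :=
  IsClosed K ∧ Convex ℝ K ∧ ∀ l : ℝ, 0 ≤ l → ∀ k ∈ K, l • k ∈ K

/-- `f` is `K`-nondecreasing on `U`. -/
def KNondecreasingOn {X : Type*} [AddCommGroup X] [Module ℝ X]
    (f : X → ℝ) (K U : Set X) : Prop :=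
  ∀ u ∈ U, ∀ k ∈ K, k ≠ 0 → u + k ∈ U → f u ≤ f (u + k)

/-- Ideally convex subset: stable under infinite convex combinations of bounded sequences. -/
def IdeallyConvex {X : Type*} [NormedAddCommGroup X] [NormedSpace ℝ X] (C : Set X) : Prop :=
  ∀ (x : ℕ → X) (lam : ℕ → ℝ), (∀ n, x n ∈ C) → Bornology.IsBounded (Set.range x) →
    (∀ n, lam n ∈ Set.Icc (0 : ℝ) 1) → HasSum lam 1 →
      ∑' n, lam n • x n ∈ C

/-- `C‡`: the union, over finite dimensional subspaces `Z ⊆ X`, of the closures of `C ∩ Z`. -/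
def Ddag {X : Type*} [NormedAddCommGroup X] [NormedSpace ℝ X] (C : Set X) : Set X :=
  ⋃ (Z : Submodule ℝ X) (_ : FiniteDimensional ℝ Z), closure (C ∩ (Z : Set X))

/-- A normed space is reflexive if the canonical inclusion into its double dual is onto. -/
def IsReflexiveSpace (X : Type*) [NormedAddCommGroup X] [NormedSpace ℝ X] : Prop :=
  Function.Surjective (NormedSpace.inclusionInDoubleDual ℝ X)

/-- If `{f ≤ m}` is nonmeager then it has nonempty interior and nowhere dense boundary;
if moreover the space is separable, the boundary is Aronszajn null. -/
theorem stmt_2 {X : Type*} [NormedAddCommGroup X] [NormedSpace ℝ X] [CompleteSpace X]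
    [MeasurableSpace X] [BorelSpace X]
    (f : X → ℝ) (hq : QuasiconvexFun f) (hd : DenselyContinuous f)
    (m : ℝ) (hm : IsTopEssInf f m)
    (hnonmeagre : ¬ IsMeagre {x : X | f x ≤ m}) :
    (interior {x : X | f x ≤ m}).Nonempty ∧
    IsNowhereDense (frontier {x : X | f x ≤ m}) ∧
    (TopologicalSpace.SeparableSpace X → AronszajnNull (frontier {x : X | f x ≤ m})) := by
  classical
  have hd' : Dense {x : X | ContinuousAt f x} := hd
  set C : Set X := {x : X | f x ≤ m} with hCdef
  have hCconv : Convex ℝ C := by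
    intro x hx y hy a b ha hb hab
    have h := hq x y a ⟨ha, by linarith⟩
    have hb' : (1 : ℝ) - a = b := by linarith
    rw [hb'] at h
    exact le_trans h (max_le hx hy)
  have hUopen : IsOpen (interior (closure C)) := isOpen_interior
  have hUne : (interior (closure C)).Nonempty := by
    by_contra h
    rw [Set.not_nonempty_iff_eq_empty] at h
    refine hnonmeagre (isMeagre_iff_countable_union_isNowhereDense.mpr
      ⟨{C}, ?_, Set.countable_singleton _, by simp⟩)
    intro t ht
    rw [Set.mem_singleton_iff] at ht
    subst ht
    exact h
  have hA : ∀ x, x ∈ closure C → ContinuousAt f x → f x ≤ m := by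
    intro x hx hcont
    by_contra hgt
    push_neg at hgt
    obtain ⟨y, hy1, hy2⟩ :=
      mem_closure_iff_nhds.mp hx _ (hcont.preimage_mem_nhds (Ioi_mem_nhds hgt))
    simp only [Set.mem_preimage, Set.mem_Ioi] at hy1
    have : f y ≤ m := hy2
    linarith
  have hUC : interior (closure C) ⊆ C := by
    intro y hy
    have key : ∀ ε : ℝ, 0 < ε → f y ≤ m + ε := by
      intro ε hε
      obtain ⟨x, hxc, hxU⟩ := Dense.exists_mem_open hd' hUopen ⟨y, hy⟩
      have hfx : f x ≤ m := hA x (interior_subset hxU) hxc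
      have h2 : interior (closure C) ∩ f ⁻¹' Set.Iio (m + ε) ∈ 𝓝 x :=
        inter_mem (hUopen.mem_nhds hxU) (hxc.preimage_mem_nhds (Iio_mem_nhds (by linarith)))
      obtain ⟨r, hr, hball⟩ := Metric.mem_nhds_iff.mp h2
      obtain ⟨ρ, hρ, hbally⟩ := Metric.mem_nhds_iff.mp (hUopen.mem_nhds hy)
      set d : ℝ := ‖y - x‖ with hdd
      have hd0 : 0 ≤ d := norm_nonneg _
      set s : ℝ := ρ / (2 * (d + 1)) with hsd
      have hs0 : 0 < s := by positivity
      have hsne : s ≠ 0 := ne_of_gt hs0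
      have hbstar : y + s • (y - x) ∈ closure C := by
        apply interior_subset
        apply hbally
        rw [Metric.mem_ball, dist_eq_norm]
        have heq : y + s • (y - x) - y = s • (y - x) := by abel
        rw [heq, norm_smul, Real.norm_of_nonneg hs0.le]
        rw [hsd]
        rw [div_mul_eq_mul_div, div_lt_iff₀ (by positivity)]
        nlinarith
      obtain ⟨b, hbC, hbd⟩ := Metric.mem_closure_iff.mp hbstar (s * r) (by positivity)
      set c : X := x + s⁻¹ • ((y + s • (y - x)) - b) with hcd
      have hcball : c ∈ Metric.ball x r := by
        rw [Metric.mem_ball, dist_eq_norm]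
        have heq : c - x = s⁻¹ • ((y + s • (y - x)) - b) := by rw [hcd]; abel
        rw [heq, norm_smul, Real.norm_of_nonneg (by positivity)]
        rw [dist_eq_norm] at hbd
        calc s⁻¹ * ‖y + s • (y - x) - b‖ < s⁻¹ * (s * r) :=
              mul_lt_mul_of_pos_left hbd (by positivity)
          _ = r := by field_simp
      have hfc : f c < m + ε := by
        have := (hball hcball).2
        simpa using this
      have hfb : f b ≤ m := hbC
      set l : ℝ := s / (1 + s) with hld
      have h1s : (0:ℝ) < 1 + s := by linarith
      have hl0 : 0 ≤ l := by positivity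
      have hl1 : l ≤ 1 := by
        rw [hld, div_le_one h1s]; linarith
      have hyeq : l • c + (1 - l) • b = y := by
        rw [hcd, hld]
        match_scalars
        · field_simp
          ring
        · field_simp
        · field_simp
          ring
      have hmax := hq c b l ⟨hl0, hl1⟩
      rw [hyeq] at hmax
      exact le_trans hmax (max_le hfc.le (by linarith))
    by_contra hgt
    have hgt' : m < f y := lt_of_not_ge hgt
    have h2 := key ((f y - m)/2) (by linarith)
    linarith
  have hUint : interior (closure C) ⊆ interior C := interior_maximal hUC hUopen
  have hIntNe : (interior C).Nonempty := hUne.mono hUint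
  have hfrontierInterior : ∀ x ∈ frontier C, x ∉ interior (closure C) := by
    intro x hx hxU
    rw [← closure_diff_interior] at hx
    exact hx.2 (hUint hxU)
  have hfrontND : IsNowhereDense (frontier C) := by
    have h1 : interior (frontier C) = ∅ := by
      rw [Set.eq_empty_iff_forall_notMem]
      intro x hx
      have hsub : interior (frontier C) ⊆ interior (closure C) :=
        interior_mono frontier_subset_closure
      exact hfrontierInterior x (interior_subset hx) (hsub hx)
    show interior (closure (frontier C)) = ∅
    rw [isClosed_frontier.closure_eq, h1]
  refine ⟨hIntNe, hfrontND, ?_⟩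
  intro _hsep
  obtain ⟨z, hz⟩ := hUne
  have hDconv : Convex ℝ (closure C) := hCconv.closure
  refine ⟨isClosed_frontier.measurableSet, ?_⟩
  intro ξ hξ
  have hsupp : ∀ x ∈ frontier C, ∃ L : X →L[ℝ] ℝ, L ≠ 0 ∧ ∀ y ∈ closure C, L y ≤ L x := by
    intro x hx
    obtain ⟨L, hL⟩ := geometric_hahn_banach_open_point hDconv.interior isOpen_interior
      (hfrontierInterior x hx)
    refine ⟨L, ?_, ?_⟩
    · intro h0
      have := hL z hz
      rw [h0] at this
      simp at this
    · intro y hy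
      have hcont : Continuous fun a : ℝ => L (a • z + (1 - a) • y) := by fun_prop
      have htend : Filter.Tendsto (fun a : ℝ => L (a • z + (1 - a) • y))
          (nhdsWithin (0:ℝ) (Set.Ioi 0)) (nhds (L y)) := by
        have h0 : L ((0:ℝ) • z + (1 - (0:ℝ)) • y) = L y := by simp
        have := hcont.continuousAt (x := (0:ℝ))
        exact h0 ▸ this.continuousWithinAt.tendsto
      refine le_of_tendsto htend ?_
      filter_upwards [Ioo_mem_nhdsGT_of_mem (Set.mem_Ico.mpr ⟨le_refl (0:ℝ), one_pos⟩)] with a ha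
      have hmem : a • z + (1 - a) • y ∈ interior (closure C) :=
        hDconv.combo_interior_closure_mem_interior hz (subset_closure hy) ha.1
          (by linarith [ha.2]) (by ring)
      exact (hL _ hmem).le
  have hLn : ∀ L : X →L[ℝ] ℝ, L ≠ 0 → ∃ n, L (ξ n) ≠ 0 := by
    intro L hL0
    by_contra h
    push_neg at h
    apply hL0
    have hker : Submodule.span ℝ (Set.range ξ) ≤ LinearMap.ker (L : X →ₗ[ℝ] ℝ) := by
      rw [Submodule.span_le]
      rintro v ⟨n, rfl⟩
      simpa using h n
    have hEq : Set.EqOn (⇑L) (fun _ => (0:ℝ))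
        ((Submodule.span ℝ (Set.range ξ) : Submodule ℝ X) : Set X) := by
      intro v hv
      have := hker hv
      simpa using this
    have hfun := Continuous.ext_on hξ L.continuous continuous_const hEq
    exact ContinuousLinearMap.ext fun v => by simpa using congrFun hfun v
  set A : ℕ → ℕ → ℝ → Set X := fun n k σ =>
    frontier C ∩ ⋂ (t : ℝ) (_ : 0 < t) (y : X) (_ : y ∈ closure C),
      {x : X | t / ((k:ℝ) + 1) ≤ dist (x + (σ * t) • ξ n) y} with hA
  have hAmem : ∀ n k σ x, x ∈ A n k σ ↔ x ∈ frontier C ∧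
      ∀ t : ℝ, 0 < t → ∀ y ∈ closure C, t / ((k:ℝ)+1) ≤ dist (x + (σ * t) • ξ n) y := by
    intro n k σ x
    rw [hA]
    simp only [Set.mem_inter_iff, Set.mem_iInter, Set.mem_setOf_eq]
  have hAclosed : ∀ n k σ, IsClosed (A n k σ) := by
    intro n k σ
    rw [hA]
    apply IsClosed.inter isClosed_frontier
    refine isClosed_iInter fun t => isClosed_iInter fun ht =>
      isClosed_iInter fun y => isClosed_iInter fun hy => ?_
    exact isClosed_le continuous_const
      (Continuous.dist (continuous_id.add continuous_const) continuous_const)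
  have hcover : frontier C = ⋃ n, ⋃ k : ℕ, (A n k 1 ∪ A n k (-1)) := by
    apply Set.Subset.antisymm
    · intro x hx
      obtain ⟨L, hL0, hLsup⟩ := hsupp x hx
      obtain ⟨n, hn⟩ := hLn L hL0
      have hLpos : 0 < ‖L‖ := norm_pos_iff.mpr hL0
      have hε : 0 < |L (ξ n)| / ‖L‖ := div_pos (abs_pos.mpr hn) hLpos
      obtain ⟨k, hk⟩ := exists_nat_ge (1 / (|L (ξ n)| / ‖L‖))
      have hkε : 1 / ((k:ℝ)+1) ≤ |L (ξ n)| / ‖L‖ := by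
        rw [div_le_iff₀ (by positivity)]
        have h4 : 1 ≤ (k:ℝ) * (|L (ξ n)| / ‖L‖) := (div_le_iff₀ hε).mp hk
        nlinarith [hε.le]
      set σ : ℝ := if 0 < L (ξ n) then 1 else -1 with hσd
      have hσLξ : σ * L (ξ n) = |L (ξ n)| := by
        rw [hσd]; split_ifs with hpos
        · rw [abs_of_pos hpos]; ring
        · rw [abs_of_nonpos (le_of_not_gt hpos)]; ring
      have hxA : x ∈ A n k σ := by
        rw [hAmem]
        refine ⟨hx, ?_⟩
        intro t ht y hy
        have hLx : L (x + (σ * t) • ξ n) = L x + (σ * t) * L (ξ n) := by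
          rw [map_add, L.map_smul, smul_eq_mul]
        have h3 : (σ * t) * L (ξ n) = t * |L (ξ n)| := by rw [← hσLξ]; ring
        have h1 : t * |L (ξ n)| ≤ L (x + (σ * t) • ξ n) - L y := by
          have := hLsup y hy
          rw [hLx]
          linarith [h3]
        have h2 : t * |L (ξ n)| ≤ ‖L‖ * dist (x + (σ * t) • ξ n) y := by
          calc t * |L (ξ n)| ≤ L (x + (σ * t) • ξ n) - L y := h1
            _ ≤ |L (x + (σ * t) • ξ n) - L y| := le_abs_self _
            _ = ‖L ((x + (σ * t) • ξ n) - y)‖ := by rw [map_sub, Real.norm_eq_abs]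
            _ ≤ ‖L‖ * ‖(x + (σ * t) • ξ n) - y‖ := L.le_opNorm _
            _ = ‖L‖ * dist (x + (σ * t) • ξ n) y := by rw [dist_eq_norm]
        have hdist : t * |L (ξ n)| / ‖L‖ ≤ dist (x + (σ * t) • ξ n) y := by
          rw [div_le_iff₀ hLpos]
          linarith [h2]
        calc t / ((k:ℝ)+1) = t * (1 / ((k:ℝ)+1)) := by ring
          _ ≤ t * (|L (ξ n)| / ‖L‖) := mul_le_mul_of_nonneg_left hkε ht.le
          _ = t * |L (ξ n)| / ‖L‖ := by ring
          _ ≤ dist (x + (σ * t) • ξ n) y := hdist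
      refine Set.mem_iUnion.mpr ⟨n, Set.mem_iUnion.mpr ⟨k, ?_⟩⟩
      by_cases hpos : 0 < L (ξ n)
      · left; rw [hσd, if_pos hpos] at hxA; exact hxA
      · right; rw [hσd, if_neg hpos] at hxA; exact hxA
    · intro x hx
      simp only [Set.mem_iUnion, Set.mem_union] at hx
      obtain ⟨n, k, hx⟩ := hx
      rcases hx with hx | hx
      · exact ((hAmem _ _ _ _).mp hx).1
      · exact ((hAmem _ _ _ _).mp hx).1
  refine ⟨fun n => ⋃ k : ℕ, (A n k 1 ∪ A n k (-1)), hcover, ?_⟩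
  intro n
  refine ⟨MeasurableSet.iUnion fun k =>
    ((hAclosed n k 1).measurableSet.union (hAclosed n k (-1)).measurableSet), ?_⟩
  intro x
  have hsub : ∀ (k : ℕ) (σ : ℝ), σ ≠ 0 → {t : ℝ | x + t • ξ n ∈ A n k σ}.Subsingleton := by
    intro k σ hσ
    have haux : ∀ a b : ℝ, x + a • ξ n ∈ A n k σ → x + b • ξ n ∈ A n k σ → σ * (b - a) ≤ 0 := by
      intro a b ha hb
      by_contra hpos
      push_neg at hpos
      obtain ⟨haf, hprop⟩ := (hAmem n k σ _).mp ha
      have hbD : x + b • ξ n ∈ closure C :=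
        frontier_subset_closure ((hAmem n k σ _).mp hb).1
      have ht0 : 0 < (b - a) / σ := by
        have h2 : (b - a)/σ = (σ * (b - a))/σ^2 := by
          field_simp
        rw [h2]
        positivity
      have hkey := hprop ((b - a)/σ) ht0 (x + b • ξ n) hbD
      have hσval : σ * ((b - a)/σ) = b - a := by field_simp
      rw [hσval] at hkey
      have hpt : x + a • ξ n + (b - a) • ξ n = x + b • ξ n := by
        have hab : a + (b - a) = b := by ring
        rw [add_assoc, ← add_smul, hab]
      rw [hpt, dist_self] at hkey
      have hq0 : 0 < (b - a)/σ / ((k:ℝ)+1) := by positivity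
      linarith
    intro t1 h1 t2 h2
    have ha := haux t1 t2 h1 h2
    have hb := haux t2 t1 h2 h1
    have hz0 : σ * (t2 - t1) = 0 := le_antisymm ha (by linarith)
    rcases mul_eq_zero.mp hz0 with h | h
    · exact absurd h hσ
    · linarith
  have hset : {t : ℝ | x + t • ξ n ∈ ⋃ k : ℕ, (A n k 1 ∪ A n k (-1))} =
      ⋃ k : ℕ, ({t : ℝ | x + t • ξ n ∈ A n k 1} ∪ {t : ℝ | x + t • ξ n ∈ A n k (-1)}) := by
    ext t
    simp [Set.mem_iUnion]
  rw [hset]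
  refine measure_iUnion_null fun k => measure_union_null ?_ ?_
  · exact Set.Subsingleton.measure_zero (hsub k 1 one_ne_zero) _
  · exact Set.Subsingleton.measure_zero (hsub k (-1) (by norm_num)) _
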